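/- Let A be a real symmetric positive semidefinite n×n matrix, q ∈ ℝ^n, and f(x) = xᵀAx + qᵀx. Let a₁,…,a_m, c₁,…,c_l ∈ ℝ^n and b₁,…,b_m, w₁,…,w_l ∈ ℝ, and let S = { x ∈ ℝ^n : aᵢᵀx + bᵢ ≥ 0 for i = 1,…,m, and cⱼᵀx + wⱼ = 0 for j = 1,…,l }. Suppose x⋆ ∈ S attains the minimum f⋆ of f over S. Then there exist η ∈ ℝ^m with ηᵢ ≥ 0 for all i and γ ∈ ℝ^l such that for every x ∈ ℝ^n: f(x) − f⋆ = (x − x⋆)ᵀA(x − x⋆) + Σᵢ ηᵢ(aᵢᵀx + bᵢ) + Σⱼ γⱼ(cⱼᵀx + wⱼ). (This identity shows that the order-1 sum-of-squares relaxation of the convex quadratic program is exact.) -/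

import Mathlib

open Matrix BigOperators

private lemma farkas_fin (n : ℕ) : ∀ (k : ℕ) (v : Fin k → (Fin n → ℝ)) (g : Fin n → ℝ),
    (∀ x : Fin n → ℝ, (∀ i, 0 ≤ v i ⬝ᵥ x) → 0 ≤ g ⬝ᵥ x) →
    ∃ η : Fin k → ℝ, (∀ i, 0 ≤ η i) ∧ g = ∑ i, η i • v i := by
  intro k
  induction k with
  | zero =>
    intro v g h
    refine ⟨0, fun i => le_refl _, ?_⟩
    have h1 : 0 ≤ g ⬝ᵥ (-g) := h (-g) (fun i => i.elim0)
    rw [dotProduct_neg] at h1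
    have h3 : 0 ≤ g ⬝ᵥ g := Finset.sum_nonneg fun i _ => mul_self_nonneg _
    have h2 : g ⬝ᵥ g = 0 := le_antisymm (by linarith) h3
    have hg0 : g = 0 := by
      funext j
      have := (Finset.sum_eq_zero_iff_of_nonneg
        (fun i _ => mul_self_nonneg (g i))).mp h2 j (Finset.mem_univ j)
      have : g j * g j = 0 := this
      simpa [mul_self_eq_zero] using this
    simp [hg0]
  | succ k ih =>
    intro v g h
    by_cases hc : ∀ x : Fin n → ℝ, (∀ i : Fin k, 0 ≤ v i.castSucc ⬝ᵥ x) → 0 ≤ g ⬝ᵥ x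
    · obtain ⟨η, hη, hg⟩ := ih (fun i => v i.castSucc) g hc
      refine ⟨Fin.snoc η 0, ?_, ?_⟩
      · intro i
        induction i using Fin.lastCases with
        | last => simp
        | cast i => simpa using hη i
      · rw [Fin.sum_univ_castSucc]
        simp [Fin.snoc, hg]
    · push_neg at hc
      obtain ⟨x₀, hx₀, hgx₀⟩ := hc
      set u := v (Fin.last k) with hu
      set α := u ⬝ᵥ x₀ with hα
      have hαneg : α < 0 := by
        by_contra hge
        push_neg at hge
        have hall : ∀ i : Fin (k+1), 0 ≤ v i ⬝ᵥ x₀ := by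
          intro i
          induction i using Fin.lastCases with
          | last => exact hge
          | cast i => exact hx₀ i
        exact absurd (h x₀ hall) (not_le.mpr hgx₀)
      have hα0 : α ≠ 0 := ne_of_lt hαneg
      set v' : Fin k → (Fin n → ℝ) := fun i => v i.castSucc - ((v i.castSucc ⬝ᵥ x₀) / α) • u with hv'
      set g' : Fin n → ℝ := g - ((g ⬝ᵥ x₀) / α) • u with hg'
      have hIH : ∀ x : Fin n → ℝ, (∀ i : Fin k, 0 ≤ v' i ⬝ᵥ x) → 0 ≤ g' ⬝ᵥ x := by
        intro x hx
        set y := x - ((u ⬝ᵥ x) / α) • x₀ with hy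
        have hfeas : ∀ i : Fin (k+1), 0 ≤ v i ⬝ᵥ y := by
          intro i
          induction i using Fin.lastCases with
          | last =>
            have : u ⬝ᵥ y = 0 := by
              rw [hy, dotProduct_sub, dotProduct_smul, smul_eq_mul, ← hα]
              field_simp
              ring
            rw [← hu, this]
          | cast i =>
            have h1 := hx i
            rw [hv', sub_dotProduct, smul_dotProduct, smul_eq_mul] at h1
            rw [hy, dotProduct_sub, dotProduct_smul, smul_eq_mul]
            have e : v i.castSucc ⬝ᵥ x - u ⬝ᵥ x / α * (v i.castSucc ⬝ᵥ x₀)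
                = v i.castSucc ⬝ᵥ x - v i.castSucc ⬝ᵥ x₀ / α * (u ⬝ᵥ x) := by ring
            rw [e]; exact h1
        have h2 := h y hfeas
        rw [hy, dotProduct_sub, dotProduct_smul, smul_eq_mul] at h2
        rw [hg', sub_dotProduct, smul_dotProduct, smul_eq_mul]
        have e : g ⬝ᵥ x - g ⬝ᵥ x₀ / α * (u ⬝ᵥ x)
            = g ⬝ᵥ x - u ⬝ᵥ x / α * (g ⬝ᵥ x₀) := by ring
        rw [e]; exact h2
      obtain ⟨η', hη', hgeq⟩ := ih v' g' hIH
      set cc : ℝ := (g ⬝ᵥ x₀ - ∑ i, η' i * (v i.castSucc ⬝ᵥ x₀)) / α with hcc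
      have hccnn : 0 ≤ cc := by
        rw [hcc]
        apply div_nonneg_iff.mpr
        right
        constructor
        · have : 0 ≤ ∑ i, η' i * (v i.castSucc ⬝ᵥ x₀) :=
            Finset.sum_nonneg fun i _ => mul_nonneg (hη' i) (hx₀ i)
          linarith
        · exact le_of_lt hαneg
      refine ⟨Fin.snoc η' cc, ?_, ?_⟩
      · intro i
        induction i using Fin.lastCases with
        | last => simpa using hccnn
        | cast i => simpa using hη' i
      · rw [Fin.sum_univ_castSucc]
        simp only [Fin.snoc_castSucc, Fin.snoc_last]
        have hg2 : g = g' + ((g ⬝ᵥ x₀) / α) • u := by rw [hg']; abel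
        rw [hg2, hgeq, hv']
        funext j
        simp only [Finset.sum_apply, Pi.add_apply, Pi.smul_apply, Pi.sub_apply, smul_eq_mul,
          mul_sub, hcc, ← hu]
        rw [Finset.sum_sub_distrib]
        have h2 : ∑ i, η' i * (v i.castSucc ⬝ᵥ x₀ / α * u j)
            = (∑ i, η' i * (v i.castSucc ⬝ᵥ x₀)) / α * u j := by
          rw [Finset.sum_div, Finset.sum_mul]
          exact Finset.sum_congr rfl fun i _ => by ring
        rw [h2]
        ring

private lemma farkas_fintype {ι : Type} [Fintype ι] (n : ℕ) (v : ι → Fin n → ℝ) (g : Fin n → ℝ)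
    (h : ∀ x : Fin n → ℝ, (∀ i, 0 ≤ v i ⬝ᵥ x) → 0 ≤ g ⬝ᵥ x) :
    ∃ η : ι → ℝ, (∀ i, 0 ≤ η i) ∧ g = ∑ i, η i • v i := by
  have e := Fintype.equivFin ι
  obtain ⟨η, hη, hg⟩ := farkas_fin n (Fintype.card ι) (fun j => v (e.symm j)) g
    (fun x hx => h x (fun i => by simpa using hx (e i)))
  refine ⟨fun i => η (e i), fun i => hη _, ?_⟩
  rw [hg]
  rw [← Equiv.sum_comp e (fun j => η j • v (e.symm j))]
  simp

private lemma sum_dotProduct' {ι : Type} (n : ℕ) (s : Finset ι) (f : ι → Fin n → ℝ)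
    (x : Fin n → ℝ) : (∑ i ∈ s, f i) ⬝ᵥ x = ∑ i ∈ s, f i ⬝ᵥ x := by
  simp only [dotProduct, Finset.sum_apply, Finset.sum_mul]
  rw [Finset.sum_comm]

/-- Exactness of the order-1 SOS relaxation for convex quadratic programs:
if `x⋆` minimizes `f(x) = xᵀAx + qᵀx` (with `A ⪰ 0`) over the polyhedron given by the
affine inequalities `aᵢᵀx + bᵢ ≥ 0` and equalities `cⱼᵀx + wⱼ = 0`, then there exist
multipliers `η ≥ 0` and `γ` such that
`f(x) − f⋆ = (x−x⋆)ᵀA(x−x⋆) + Σᵢ ηᵢ(aᵢᵀx+bᵢ) + Σⱼ γⱼ(cⱼᵀx+wⱼ)` for all `x`. -/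
theorem stmt4 (n m l : ℕ)
    (A : Matrix (Fin n) (Fin n) ℝ) (hA : A.PosSemidef) (q : Fin n → ℝ)
    (a : Fin m → Fin n → ℝ) (b : Fin m → ℝ)
    (c : Fin l → Fin n → ℝ) (w : Fin l → ℝ)
    (xstar : Fin n → ℝ)
    (hineq : ∀ i, 0 ≤ a i ⬝ᵥ xstar + b i) (heq : ∀ j, c j ⬝ᵥ xstar + w j = 0)
    (hopt : ∀ x : Fin n → ℝ, (∀ i, 0 ≤ a i ⬝ᵥ x + b i) → (∀ j, c j ⬝ᵥ x + w j = 0) →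
      xstar ⬝ᵥ A.mulVec xstar + q ⬝ᵥ xstar ≤ x ⬝ᵥ A.mulVec x + q ⬝ᵥ x) :
    ∃ (η : Fin m → ℝ) (γ : Fin l → ℝ), (∀ i, 0 ≤ η i) ∧
      ∀ x : Fin n → ℝ,
        (x ⬝ᵥ A.mulVec x + q ⬝ᵥ x) - (xstar ⬝ᵥ A.mulVec xstar + q ⬝ᵥ xstar)
          = (x - xstar) ⬝ᵥ A.mulVec (x - xstar)
            + ∑ i, η i * (a i ⬝ᵥ x + b i) + ∑ j, γ j * (c j ⬝ᵥ x + w j) := by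
  -- slacks
  set s : Fin m → ℝ := fun i => a i ⬝ᵥ xstar + b i with hs
  -- symmetry of the quadratic form
  have hsym' : ∀ i j, A i j = A j i := by
    intro i j
    have := congrFun (congrFun hA.1 i) j
    simpa [Matrix.conjTranspose_apply] using this.symm
  have hsymm : ∀ x y : Fin n → ℝ, x ⬝ᵥ A.mulVec y = y ⬝ᵥ A.mulVec x := by
    intro x y
    simp only [dotProduct, Matrix.mulVec, dotProduct, Finset.mul_sum]
    rw [Finset.sum_comm]
    apply Finset.sum_congr rfl; intro i _
    apply Finset.sum_congr rfl; intro j _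
    rw [hsym' j i]; ring
  -- the gradient at xstar
  set g : Fin n → ℝ := (2 : ℝ) • A.mulVec xstar + q with hg
  -- key expansion
  have hExp : ∀ x : Fin n → ℝ,
      (x ⬝ᵥ A.mulVec x + q ⬝ᵥ x) - (xstar ⬝ᵥ A.mulVec xstar + q ⬝ᵥ xstar)
        = (x - xstar) ⬝ᵥ A.mulVec (x - xstar) + g ⬝ᵥ (x - xstar) := by
    intro x
    have h1 : x ⬝ᵥ A.mulVec xstar = xstar ⬝ᵥ A.mulVec x := hsymm x xstar
    rw [hg]
    simp only [Matrix.mulVec_sub, dotProduct_sub, sub_dotProduct,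
      add_dotProduct, smul_dotProduct, dotProduct_smul, smul_eq_mul]
    rw [dotProduct_comm (A.mulVec xstar) x, dotProduct_comm (A.mulVec xstar) xstar,
      h1]
    ring
  -- the vectors for Farkas
  set v : (Fin m ⊕ (Fin l ⊕ Fin l)) → (Fin n → ℝ) := fun i =>
    match i with
    | Sum.inl i => if s i = 0 then a i else 0
    | Sum.inr (Sum.inl j) => c j
    | Sum.inr (Sum.inr j) => -(c j) with hv
  have hQnn : ∀ d : Fin n → ℝ, 0 ≤ d ⬝ᵥ A.mulVec d := by
    intro d
    simpa using hA.dotProduct_mulVec_nonneg d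
  -- Farkas hypothesis
  have hFark : ∀ d : Fin n → ℝ, (∀ i, 0 ≤ v i ⬝ᵥ d) → 0 ≤ g ⬝ᵥ d := by
    intro d hd
    have hceq : ∀ j, c j ⬝ᵥ d = 0 := by
      intro j
      have h1 := hd (Sum.inr (Sum.inl j))
      have h2 := hd (Sum.inr (Sum.inr j))
      simp only [hv, neg_dotProduct] at h1 h2
      linarith
    have hact : ∀ i, s i = 0 → 0 ≤ a i ⬝ᵥ d := by
      intro i hi
      have h1 := hd (Sum.inl i)
      simp only [hv, hi, if_pos] at h1
      simpa using h1
    by_contra hG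
    push_neg at hG
    set Q := d ⬝ᵥ A.mulVec d with hQ
    have hQ0 : 0 ≤ Q := hQnn d
    set t₁ : ℝ := -(g ⬝ᵥ d) / (Q + 1) with ht₁
    have ht₁pos : 0 < t₁ := div_pos (by linarith) (by linarith)
    set T : Option (Fin m) → ℝ := fun o =>
      match o with
      | none => t₁
      | some i => if s i = 0 then t₁ else min t₁ (s i / (|a i ⬝ᵥ d| + 1)) with hT
    set t : ℝ := Finset.univ.inf' Finset.univ_nonempty T with ht
    have htpos : 0 < t := by
      rw [ht, Finset.lt_inf'_iff]
      intro o _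
      match o with
      | none => exact ht₁pos
      | some i =>
        by_cases hi : s i = 0
        · simp [hT, hi, ht₁pos]
        · have hsi : 0 < s i := lt_of_le_of_ne (hineq i) (Ne.symm hi)
          have : 0 < s i / (|a i ⬝ᵥ d| + 1) :=
            div_pos hsi (by positivity)
          simp [hT, hi, lt_min_iff, ht₁pos, this]
    have htle : t ≤ t₁ := Finset.inf'_le _ (Finset.mem_univ none)
    -- feasibility of xstar + t • d
    have hfeas1 : ∀ i, 0 ≤ a i ⬝ᵥ (xstar + t • d) + b i := by
      intro i
      have hexp : a i ⬝ᵥ (xstar + t • d) + b i = t * (a i ⬝ᵥ d) + s i := by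
        rw [dotProduct_add, dotProduct_smul, smul_eq_mul, hs]
        ring
      rw [hexp]
      by_cases hi : s i = 0
      · have := hact i hi
        rw [hi]
        have : 0 ≤ t * (a i ⬝ᵥ d) := mul_nonneg (le_of_lt htpos) this
        linarith
      · have hsi : 0 < s i := lt_of_le_of_ne (hineq i) (Ne.symm hi)
        have htle2 : t ≤ s i / (|a i ⬝ᵥ d| + 1) := by
          have h1 : t ≤ T (some i) := Finset.inf'_le _ (Finset.mem_univ (some i))
          simp only [hT, hi, if_neg, if_false] at h1
          exact le_trans h1 (min_le_right _ _)
        have habs : 0 < |a i ⬝ᵥ d| + 1 := by positivity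
        have hb1 : t * |a i ⬝ᵥ d| ≤ s i := by
          have h2 : t * (|a i ⬝ᵥ d| + 1) ≤ s i := by
            calc t * (|a i ⬝ᵥ d| + 1) ≤ (s i / (|a i ⬝ᵥ d| + 1)) * (|a i ⬝ᵥ d| + 1) := by
                  apply mul_le_mul_of_nonneg_right htle2 (le_of_lt habs)
              _ = s i := by field_simp
          nlinarith [le_of_lt htpos]
        have : -(t * (a i ⬝ᵥ d)) ≤ t * |a i ⬝ᵥ d| := by
          rw [← mul_neg]
          apply mul_le_mul_of_nonneg_left _ (le_of_lt htpos)
          exact neg_le_abs _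
        linarith
    have hfeas2 : ∀ j, c j ⬝ᵥ (xstar + t • d) + w j = 0 := by
      intro j
      rw [dotProduct_add, dotProduct_smul, smul_eq_mul, hceq j]
      have := heq j
      linarith
    have hge := hopt (xstar + t • d) hfeas1 hfeas2
    have hkey := hExp (xstar + t • d)
    rw [add_sub_cancel_left] at hkey
    have hsmul1 : (t • d) ⬝ᵥ A.mulVec (t • d) = t * t * Q := by
      rw [smul_dotProduct, Matrix.mulVec_smul, dotProduct_smul, hQ]
      simp [smul_eq_mul]; ring
    have hsmul2 : g ⬝ᵥ (t • d) = t * (g ⬝ᵥ d) := by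
      rw [dotProduct_smul, smul_eq_mul]
    rw [hsmul1, hsmul2] at hkey
    have h0 : 0 ≤ t * t * Q + t * (g ⬝ᵥ d) := by linarith
    have h1 : 0 ≤ t * Q + g ⬝ᵥ d := by
      by_contra hneg
      push_neg at hneg
      have : t * (t * Q + g ⬝ᵥ d) < 0 := mul_neg_of_pos_of_neg htpos hneg
      nlinarith
    have h2 : t * Q + g ⬝ᵥ d ≤ t₁ * Q + g ⬝ᵥ d := by nlinarith
    have h3 : t₁ * Q + g ⬝ᵥ d < 0 := by
      rw [ht₁]
      have : -(g ⬝ᵥ d) / (Q + 1) * Q + g ⬝ᵥ d = (g ⬝ᵥ d) / (Q + 1) := by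
        field_simp
        ring
      rw [this]
      exact div_neg_of_neg_of_pos hG (by linarith)
    linarith
  obtain ⟨ηv, hηv, hgsum⟩ := farkas_fintype n v g hFark
  set η : Fin m → ℝ := fun i => if s i = 0 then ηv (Sum.inl i) else 0 with hη
  set γ : Fin l → ℝ := fun j => ηv (Sum.inr (Sum.inl j)) - ηv (Sum.inr (Sum.inr j)) with hγ
  have hηnn : ∀ i, 0 ≤ η i := by
    intro i
    rw [hη]
    by_cases hi : s i = 0 <;> simp [hi, hηv]
  have hgdecomp : g = (∑ i, η i • a i) + ∑ j, γ j • c j := by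
    rw [hgsum, Fintype.sum_sum_type, Fintype.sum_sum_type]
    congr 1
    · apply Finset.sum_congr rfl
      intro i _
      by_cases hi : s i = 0 <;> simp [hv, hη, hi]
    · rw [← Finset.sum_add_distrib]
      apply Finset.sum_congr rfl
      intro j _
      simp only [hv, hγ, smul_neg, sub_smul]
      abel
  refine ⟨η, γ, hηnn, ?_⟩
  intro x
  rw [hExp x]
  have hslack : ∀ i, η i * s i = 0 := by
    intro i
    rw [hη]
    by_cases hi : s i = 0 <;> simp [hi]
  have e1 : ∑ i, η i * (a i ⬝ᵥ x + b i)
      = ∑ i, η i * (a i ⬝ᵥ (x - xstar)) := by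
    apply Finset.sum_congr rfl
    intro i _
    have : a i ⬝ᵥ x + b i = a i ⬝ᵥ (x - xstar) + s i := by
      rw [dotProduct_sub, hs]; ring
    rw [this, mul_add, hslack i, add_zero]
  have e2 : ∑ j, γ j * (c j ⬝ᵥ x + w j)
      = ∑ j, γ j * (c j ⬝ᵥ (x - xstar)) := by
    apply Finset.sum_congr rfl
    intro j _
    have : c j ⬝ᵥ x + w j = c j ⬝ᵥ (x - xstar) + (c j ⬝ᵥ xstar + w j) := by
      rw [dotProduct_sub]; ring
    rw [this, heq j, add_zero]
  rw [e1, e2]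
  have e3 : g ⬝ᵥ (x - xstar)
      = ∑ i, η i * (a i ⬝ᵥ (x - xstar)) + ∑ j, γ j * (c j ⬝ᵥ (x - xstar)) := by
    rw [hgdecomp, add_dotProduct, sum_dotProduct', sum_dotProduct']
    congr 1 <;> exact Finset.sum_congr rfl fun i _ => by
      rw [smul_dotProduct, smul_eq_mul]
  rw [e3]
  ring
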